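/- In a free group H, if there is an element ξ with ξ x ξ⁻¹ = y and ξ y ξ⁻¹ = x for x, y ∈ H, then x = y. -/

import Mathlib

set_option linter.unusedSectionVars false
set_option maxHeartbeats 800000
namespace ConjInv
open FreeGroup List

variable {α : Type*} [DecidableEq α]

def inv1 (x : α × Bool) : α × Bool := (x.1, !x.2)

@[simp] lemma inv1_inv1 (x : α × Bool) : inv1 (inv1 x) = x := by
  cases x with | mk a b => simp [inv1]

lemma ne_inv1_self (x : α × Bool) : x ≠ inv1 x := by
  cases x with | mk a b => simp [inv1]

def R (a b : α × Bool) : Prop := b ≠ inv1 a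

lemma cond_iff {a b : α × Bool} : (a.1 = b.1 ∧ a.2 = !b.2) ↔ b = inv1 a := by
  cases a with | mk a1 a2 => cases b with | mk b1 b2 =>
  simp only [inv1, Prod.mk.injEq]
  constructor
  · rintro ⟨rfl, rfl⟩; simp
  · rintro ⟨rfl, rfl⟩; simp

def Reduced (L : List (α × Bool)) : Prop := List.IsChain R L

lemma reduced_reduce (L : List (α × Bool)) : Reduced (reduce L) := by
  induction L with
  | nil => simp [Reduced]
  | cons x L ih =>
    rw [reduce.cons]
    rcases h : reduce L with _ | ⟨hd, tl⟩
    · simp [Reduced]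
    · rw [h] at ih
      dsimp only
      split_ifs with hc
      · exact ih.tail
      · rw [Reduced, List.isChain_cons_cons]
        exact ⟨fun he => hc (cond_iff.2 he), ih⟩

lemma Reduced.reduce_eq {L : List (α × Bool)} (h : Reduced L) : reduce L = L := by
  induction L with
  | nil => rfl
  | cons x L ih =>
    have hL : reduce L = L := ih h.tail
    rw [reduce.cons, hL]
    cases L with
    | nil => rfl
    | cons hd tl =>
      dsimp only
      rw [if_neg]
      intro hc
      exact (List.isChain_cons_cons.1 h).1 (cond_iff.1 hc)

lemma Reduced.toWord_mk {L : List (α × Bool)} (h : Reduced L) : (mk L).toWord = L := by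
  rw [FreeGroup.toWord_mk, h.reduce_eq]

lemma reduced_toWord (x : FreeGroup α) : Reduced (toWord x) := by
  rw [← FreeGroup.reduce_toWord]; exact reduced_reduce _

lemma Reduced.norm_mk {L : List (α × Bool)} (h : Reduced L) : norm (mk L) = L.length := by
  rw [FreeGroup.norm, h.toWord_mk]

lemma invRev_append (L M : List (α × Bool)) : invRev (L ++ M) = invRev M ++ invRev L := by
  simp [invRev]

lemma invRev_singleton (x : α × Bool) : invRev [x] = [inv1 x] := by simp [invRev, inv1]

@[simp] lemma invRev_nil' : invRev ([] : List (α × Bool)) = [] := rfl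

lemma invRev_cons (x : α × Bool) (L : List (α × Bool)) :
    invRev (x :: L) = invRev L ++ [inv1 x] := by
  rw [show x :: L = [x] ++ L from rfl, invRev_append, invRev_singleton]

lemma mk_cancel (L₁ L₂ : List (α × Bool)) (x : α × Bool) :
    mk (L₁ ++ x :: inv1 x :: L₂) = mk (L₁ ++ L₂) := by
  cases x with | mk a b => exact Quot.sound (Red.Step.not)

lemma mk_cancel_nil (L : List (α × Bool)) (x : α × Bool) :
    mk (x :: inv1 x :: L) = mk L := mk_cancel [] L x

/-- Cyclically reduced word. -/
def CyclRed (L : List (α × Bool)) : Prop :=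
  Reduced L ∧ ∀ a ∈ L.getLast?, ∀ b ∈ L.head?, R a b

lemma pal : ∀ n (L : List (α × Bool)), L.length ≤ n → Reduced L →
    FreeGroup.invRev L = L → L = [] := by
  intro n
  induction n with
  | zero =>
    intro L hL _ _
    exact List.length_eq_zero_iff.1 (Nat.le_zero.1 hL)
  | succ n ih =>
    rintro (_ | ⟨y, T⟩) hL hred he
    · rfl
    rcases T.eq_nil_or_concat with rfl | ⟨M, z, rfl⟩
    · rw [invRev_singleton] at he
      simp only [List.cons.injEq] at he
      exact absurd he.1.symm (ne_inv1_self y)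
    · simp only [List.concat_eq_append] at hL hred he ⊢
      have hcomp : FreeGroup.invRev (y :: (M ++ [z]))
          = inv1 z :: (FreeGroup.invRev M ++ [inv1 y]) := by
        show FreeGroup.invRev ([y] ++ (M ++ [z])) = _
        rw [invRev_append, invRev_append, invRev_singleton, invRev_singleton]
        simp
      rw [hcomp] at he
      simp only [List.cons.injEq] at he
      obtain ⟨hz, htail⟩ := he
      have hlen : (FreeGroup.invRev M).length = M.length := invRev_length
      obtain ⟨hM, hy⟩ := List.append_inj htail hlen
      have hMred : Reduced M := hred.infix ⟨[y], [z], by simp⟩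
      have hMnil : M = [] := by
        refine ih M ?_ hMred hM
        have := hL
        simp only [List.length_cons, List.length_append, List.length_singleton] at this
        omega
      subst hMnil
      simp only [List.cons.injEq] at hy
      exfalso
      have : R y z := (List.isChain_cons_cons.1 hred).1
      exact this (by rw [← hy.1])

lemma rot_pal (u : List (α × Bool)) (hu : Reduced u) (n : ℕ)
    (h : u.rotate n = FreeGroup.invRev u) : u = [] := by
  rcases eq_or_ne u [] with rfl | hne
  · rfl
  rw [List.rotate_eq_drop_append_take_mod] at h
  set m := n % u.length with hm
  conv_rhs at h => rw [← List.take_append_drop m u]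
  rw [invRev_append] at h
  have hlen : (u.drop m).length = (FreeGroup.invRev (u.drop m)).length := invRev_length.symm
  obtain ⟨h1, h2⟩ := List.append_inj h hlen
  have hd : u.drop m = [] :=
    pal _ _ le_rfl (hu.suffix (u.drop_suffix m)) h1.symm
  have ht : u.take m = [] :=
    pal _ _ le_rfl (hu.prefix (u.take_prefix m)) h2.symm
  rw [← List.take_append_drop m u, hd, ht]
  rfl

lemma inv1_injective : Function.Injective (inv1 (α := α)) :=
  Function.Involutive.injective inv1_inv1

lemma cyc_shift {x : α × Bool} {t : List (α × Bool)} (h : CyclRed (x :: t)) :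
    CyclRed (t ++ [x]) := by
  obtain ⟨hred, hj⟩ := h
  rcases t with _ | ⟨b, t'⟩
  · exact ⟨hred, hj⟩
  constructor
  · rw [Reduced, List.isChain_append]
    refine ⟨hred.tail, List.isChain_singleton _, ?_⟩
    intro a ha y hy
    simp only [List.head?_cons, Option.mem_def, Option.some.injEq] at hy
    subst hy
    exact hj a (by rwa [List.getLast?_cons_cons]) x (by simp)
  · intro a ha y hy
    rw [show (b :: t') ++ [x] = b :: (t' ++ [x]) from rfl] at ha hy
    rw [List.head?_cons] at hy
    simp only [Option.mem_def, Option.some.injEq] at hy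
    subst hy
    rw [show b :: (t' ++ [x]) = (b :: t') ++ [x] from rfl, List.getLast?_concat] at ha
    simp only [Option.mem_def, Option.some.injEq] at ha
    subst ha
    exact (List.isChain_cons_cons.1 hred).1

lemma cyc_unshift {x : α × Bool} {t : List (α × Bool)} (h : CyclRed (t ++ [x])) :
    CyclRed (x :: t) := by
  obtain ⟨hred, hj⟩ := h
  rcases t with _ | ⟨b, t'⟩
  · exact ⟨hred, hj⟩
  have hred' : List.Chain' R (b :: t') ∧ ∀ a ∈ (b :: t').getLast?, R a x := by
    rw [Reduced, List.isChain_append] at hred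
    exact ⟨hred.1, fun a ha => hred.2.2 a ha x (by simp)⟩
  constructor
  · rw [Reduced, List.isChain_cons_cons]
    refine ⟨?_, hred'.1⟩
    exact hj x (by rw [List.getLast?_concat]; rfl) b (by simp)
  · intro a ha y hy
    simp only [List.head?_cons, Option.mem_def, Option.some.injEq] at hy
    subst hy
    rw [List.getLast?_cons_cons] at ha
    exact hred'.2 a ha

lemma reduced_wrap {d e : α × Bool} {S : List (α × Bool)} (hS : Reduced S) (hne : S ≠ [])
    (h1 : ∀ y ∈ S.head?, R d y) (h2 : ∀ a ∈ S.getLast?, R a e) :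
    Reduced (d :: (S ++ [e])) := by
  rw [Reduced, List.isChain_cons]
  constructor
  · intro y hy
    rcases S with _ | ⟨s0, S'⟩
    · exact absurd rfl hne
    simp only [List.cons_append, List.head?_cons, Option.mem_def, Option.some.injEq] at hy
    subst hy
    exact h1 s0 (by simp)
  · rw [List.isChain_append]
    refine ⟨hS, List.isChain_singleton _, fun a ha y hy => ?_⟩
    simp only [List.head?_cons, Option.mem_def, Option.some.injEq] at hy
    subst hy
    exact h2 a ha


lemma step (d : α × Bool) (q r : List (α × Bool)) (hne : r ≠ [])
    (hred : Reduced (q ++ r ++ invRev q)) (hcyc : CyclRed r) :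
    ∃ q' r', r ~r r' ∧ CyclRed r' ∧ r' ≠ [] ∧ Reduced (q' ++ r' ++ invRev q') ∧
      mk ([d] ++ (q ++ r ++ invRev q) ++ [inv1 d]) = mk (q' ++ r' ++ invRev q') := by
  rcases q with _ | ⟨x, q₂⟩
  · -- q = []
    rcases r with _ | ⟨x, t⟩
    · exact absurd rfl hne
    by_cases h1 : x = inv1 d
    · -- front cancellation, rotate forward
      subst h1
      refine ⟨[], t ++ [inv1 d], ⟨1, by rw [List.rotate_cons_succ, List.rotate_zero]⟩,
        cyc_shift hcyc, by simp, ?_, ?_⟩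
      · simpa using (cyc_shift hcyc).1
      · rw [show [d] ++ (([] : List (α × Bool)) ++ (inv1 d :: t)
              ++ invRev ([] : List (α × Bool))) ++ [inv1 d]
            = d :: inv1 d :: (t ++ [inv1 d]) from by simp, mk_cancel_nil]
        congr 1
        simp
    rcases t.eq_nil_or_concat with rfl | ⟨M, z, rfl⟩
    · -- r = [x], x ≠ inv1 d
      by_cases h2 : x = d
      · subst h2
        refine ⟨[], [x], IsRotated.refl _, hcyc, by simp, by simpa using hcyc.1, ?_⟩
        rw [show [x] ++ (([] : List (α × Bool)) ++ [x] ++ invRev ([] : List (α × Bool)))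
              ++ [inv1 x] = [x] ++ x :: inv1 x :: [] from by simp, mk_cancel]
        exact congrArg mk (by simp)
      · refine ⟨[d], [x], IsRotated.refl _, hcyc, by simp, ?_, ?_⟩
        · rw [show [d] ++ [x] ++ invRev [d] = d :: ([x] ++ [inv1 d]) from by
            simp [invRev_singleton]]
          refine reduced_wrap (List.isChain_singleton _) (by simp) ?_ ?_
          · intro y hy
            simp only [List.head?_cons, Option.mem_def, Option.some.injEq] at hy
            subst hy
            exact h1
          · intro a ha
            simp only [List.getLast?_singleton, Option.mem_def, Option.some.injEq] at ha
            subst ha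
            exact fun hc => h2 (inv1_injective (by simpa using hc.symm))
        · exact congrArg mk (by simp [invRev_singleton])
    · -- r = x :: (M ++ [z])
      simp only [List.concat_eq_append] at hne hred hcyc ⊢
      by_cases h2 : z = d
      · -- back cancellation, rotate backward
        subst h2
        refine ⟨[], z :: x :: M, ⟨(x :: M).length, ?_⟩, cyc_unshift hcyc, by simp,
          by simpa using (cyc_unshift hcyc).1, ?_⟩
        · rw [show x :: (M ++ [z]) = (x :: M) ++ [z] from rfl,
            List.rotate_append_length_eq]
          rfl
        · rw [show [z] ++ (([] : List (α × Bool)) ++ (x :: (M ++ [z]))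
              ++ invRev ([] : List (α × Bool))) ++ [inv1 z]
              = (z :: x :: M) ++ z :: inv1 z :: [] from by simp, mk_cancel]
          exact congrArg mk (by simp)
      · -- no cancellation
        refine ⟨[d], x :: (M ++ [z]), IsRotated.refl _, hcyc, by simp, ?_, ?_⟩
        · rw [show [d] ++ (x :: (M ++ [z])) ++ invRev [d]
              = d :: ((x :: (M ++ [z])) ++ [inv1 d]) from by simp [invRev_singleton]]
          refine reduced_wrap (by simpa using hred) (by simp) ?_ ?_
          · intro y hy
            simp only [List.head?_cons, Option.mem_def, Option.some.injEq] at hy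
            subst hy
            exact h1
          · intro a ha
            rw [show x :: (M ++ [z]) = (x :: M) ++ [z] from rfl,
              List.getLast?_concat] at ha
            simp only [Option.mem_def, Option.some.injEq] at ha
            subst ha
            exact fun hc => h2 (inv1_injective hc).symm
        · exact congrArg mk (by simp [invRev_singleton])
  · -- q = x :: q₂
    by_cases h1 : x = inv1 d
    · -- cancellation with the sandwich padding on both sides
      subst h1
      refine ⟨q₂, r, IsRotated.refl _, hcyc, hne, ?_, ?_⟩
      · exact hred.infix ⟨[inv1 d], [d], by simp [invRev_cons]⟩
      · rw [show [d] ++ ((inv1 d :: q₂) ++ r ++ invRev (inv1 d :: q₂)) ++ [inv1 d]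
            = d :: inv1 d :: ((q₂ ++ r ++ invRev q₂) ++ d :: inv1 d :: []) from by
              simp [invRev_cons], mk_cancel_nil, mk_cancel]
        exact congrArg mk (by simp)
    · -- no cancellation, grow the padding
      refine ⟨d :: x :: q₂, r, IsRotated.refl _, hcyc, hne, ?_, ?_⟩
      · rw [show (d :: x :: q₂) ++ r ++ invRev (d :: x :: q₂)
            = d :: (((x :: q₂) ++ r ++ invRev (x :: q₂)) ++ [inv1 d]) from by
              simp [invRev_cons]]
        refine reduced_wrap hred (by simp) ?_ ?_
        · intro y hy
          simp only [List.cons_append, List.head?_cons, Option.mem_def,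
            Option.some.injEq] at hy
          subst hy
          exact h1
        · intro a ha
          rw [show (x :: q₂) ++ r ++ invRev (x :: q₂)
              = ((x :: q₂) ++ r ++ invRev q₂) ++ [inv1 x] from by simp [invRev_cons],
            List.getLast?_concat] at ha
          simp only [Option.mem_def, Option.some.injEq] at ha
          subst ha
          rw [R, inv1_inv1]
          exact fun hc => h1 hc.symm
      · exact congrArg mk (by simp [invRev_cons])

lemma conj_mk (G : List (α × Bool)) :
    ∀ u : List (α × Bool), CyclRed u → u ≠ [] →
    ∃ q r, u ~r r ∧ CyclRed r ∧ r ≠ [] ∧ Reduced (q ++ r ++ invRev q) ∧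
      mk G * mk u * (mk G)⁻¹ = mk (q ++ r ++ invRev q) := by
  induction G with
  | nil =>
    intro u hcyc hne
    refine ⟨[], u, IsRotated.refl _, hcyc, hne, by simpa using hcyc.1, ?_⟩
    rw [← one_eq_mk]
    simp
  | cons d G ih =>
    intro u hcyc hne
    obtain ⟨q, r, hrot, hc, hn, hrd, heq⟩ := ih u hcyc hne
    obtain ⟨q', r', hrot', hc', hn', hrd', heq'⟩ := step d q r hn hrd hc
    refine ⟨q', r', hrot.trans hrot', hc', hn', hrd', ?_⟩
    have h1 : mk (d :: G) = mk [d] * mk G := by rw [mul_mk]; rfl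
    have h2 : (mk [d] : FreeGroup α)⁻¹ = mk [inv1 d] := by
      rw [inv_mk, invRev_singleton]
    rw [h1]
    have h3 : mk [d] * mk G * mk u * (mk [d] * mk G)⁻¹
        = mk [d] * (mk G * mk u * (mk G)⁻¹) * (mk [d])⁻¹ := by group
    rw [h3, heq, h2, mul_mk, mul_mk, ← heq']

lemma exists_cyc : ∀ (n : ℕ) (w : FreeGroup α), norm w ≤ n →
    ∃ (p : FreeGroup α) (u : List (α × Bool)), CyclRed u ∧ w = p * mk u * p⁻¹ := by
  intro n
  induction n with
  | zero =>
    intro w hw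
    have : w = 1 := norm_eq_zero.1 (Nat.le_zero.1 hw)
    subst this
    exact ⟨1, [], ⟨List.isChain_nil, by simp⟩, by simp [← one_eq_mk]⟩
  | succ n ih =>
    intro w hw
    by_cases hc : ∀ a ∈ (toWord w).getLast?, ∀ b ∈ (toWord w).head?, R a b
    · exact ⟨1, toWord w, ⟨reduced_toWord w, hc⟩, by simp [mk_toWord]⟩
    · push_neg at hc
      obtain ⟨a, ha, b, hb, hab⟩ := hc
      have hbval : b = inv1 a := not_ne_iff.1 hab
      rcases hW : toWord w with _ | ⟨y, T⟩
      · rw [hW] at hb; simp at hb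
      rw [hW] at ha hb
      simp only [List.head?_cons, Option.mem_def, Option.some.injEq] at hb
      subst hb
      rcases T.eq_nil_or_concat with rfl | ⟨M, z, rfl⟩
      · simp only [List.getLast?_singleton, Option.mem_def, Option.some.injEq] at ha
        subst ha
        exact absurd hbval (ne_inv1_self y)
      · simp only [List.concat_eq_append] at hW ha
        rw [show y :: (M ++ [z]) = (y :: M) ++ [z] from rfl, List.getLast?_concat] at ha
        simp only [Option.mem_def, Option.some.injEq] at ha
        subst ha
        have hz : z = inv1 y := by rw [hbval, inv1_inv1]
        have hwred : Reduced (y :: (M ++ [z])) := by rw [← hW]; exact reduced_toWord w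
        have hMred : Reduced M := hwred.infix ⟨[y], [z], by simp⟩
        have hnorm : norm w = M.length + 2 := by
          rw [FreeGroup.norm, hW]; simp
        obtain ⟨p, u, hcu, hpu⟩ := ih (mk M) (by rw [hMred.norm_mk]; omega)
        refine ⟨mk [y] * p, u, hcu, ?_⟩
        have hw' : w = mk [y] * mk M * (mk [y])⁻¹ := by
          rw [inv_mk, invRev_singleton, mul_mk, mul_mk]
          conv_lhs => rw [← mk_toWord (x := w), hW]
          exact congrArg mk (by simp [hz])
        rw [hw', hpu]
        group

lemma key (g w : FreeGroup α) (h : g * w * g⁻¹ = w⁻¹) : w = 1 := by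
  obtain ⟨p, u, hcyc, hw⟩ := exists_cyc (norm w) w le_rfl
  subst hw
  rcases eq_or_ne u [] with rfl | hne
  · rw [← one_eq_mk]; group
  · exfalso
    set g' := p⁻¹ * g * p with hg'
    have h' : g' * mk u * g'⁻¹ = (mk u)⁻¹ := by
      have h3 : g' * mk u * g'⁻¹ = p⁻¹ * (g * (p * mk u * p⁻¹) * g⁻¹) * p := by
        rw [hg']; group
      rw [h3, h]; group
    obtain ⟨q, r, hrot, hcr, hnr, hred, heq⟩ := conj_mk (toWord g') u hcyc hne
    rw [mk_toWord, h'] at heq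
    have hredu : Reduced u := hcyc.1
    have h1 : FreeGroup.invRev u = q ++ r ++ invRev q := by
      have := congrArg toWord heq
      rwa [toWord_inv, hredu.toWord_mk, hred.toWord_mk] at this
    have hlenr : r.length = u.length := hrot.perm.length_eq.symm
    have hq : q = [] := by
      have hlen := congrArg List.length h1
      simp only [invRev_length, List.length_append, hlenr] at hlen
      exact List.length_eq_zero_iff.1 (by omega)
    subst hq
    simp only [List.nil_append, invRev_nil', List.append_nil] at h1
    obtain ⟨n, hn⟩ := hrot
    exact hne (rot_pal u hredu n (by rw [hn, h1]))

end ConjInv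

/-- In a free group, if ξ swaps x and y by conjugation, then x = y. -/
theorem stmt_5 (H : Type*) [Group H] [IsFreeGroup H] (x y ξ : H)
    (h1 : ξ * x * ξ⁻¹ = y) (h2 : ξ * y * ξ⁻¹ = x) : x = y := by
  classical
  set e := IsFreeGroup.toFreeGroup (G := H) with he
  have hy' : ξ * y⁻¹ * ξ⁻¹ = x⁻¹ := by rw [← h2]; group
  have hconj : ξ * (x * y⁻¹) * ξ⁻¹ = (x * y⁻¹)⁻¹ := by
    calc ξ * (x * y⁻¹) * ξ⁻¹ = (ξ * x * ξ⁻¹) * (ξ * y⁻¹ * ξ⁻¹) := by group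
    _ = y * x⁻¹ := by rw [h1, hy']
    _ = (x * y⁻¹)⁻¹ := by group
  have hkey : e (x * y⁻¹) = 1 := by
    apply ConjInv.key (e ξ)
    simp only [← map_inv, ← map_mul]
    exact congrArg e hconj
  have hxy : x * y⁻¹ = 1 := by
    apply e.injective
    rw [hkey, map_one]
  rw [← mul_inv_eq_one]
  exact hxy
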